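/- For every ε ≥ 0, the map F_{C,ε} : ℝ³ → ℝ³ is a bijection with everywhere invertible derivative of determinant 1, and the induced map f_{C,ε} : 𝕋³ → 𝕋³ is a bijection; thus f_{C,ε} is a volume-preserving diffeomorphism of 𝕋³ for every ε ≥ 0. -/

import Mathlib

/-- Lift to `ℝ³` of the conservative family `f_{C,ε}`. -/
noncomputable def FC (ε : ℝ) (v : Fin 3 → ℝ) : Fin 3 → ℝ :=
  ![2 * v 0 + v 1 + ε * Real.sin (2 * Real.pi * v 0),
    v 0 + 2 * v 1 + v 2 + ε * Real.sin (2 * Real.pi * v 0),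
    v 1 + v 2]

/-- The projection `ℝ³ → 𝕋³ = ℝ³/ℤ³`. -/
noncomputable def torusProj (v : Fin 3 → ℝ) : Fin 3 → AddCircle (1 : ℝ) :=
  fun i => (v i : AddCircle (1 : ℝ))

/-- Explicit inverse of `FC ε`. -/
noncomputable def GC (ε : ℝ) (w : Fin 3 → ℝ) : Fin 3 → ℝ :=
  ![w 0 - w 1 + w 2,
    w 0 - 2 * (w 0 - w 1 + w 2) - ε * Real.sin (2 * Real.pi * (w 0 - w 1 + w 2)),
    w 2 - (w 0 - 2 * (w 0 - w 1 + w 2) - ε * Real.sin (2 * Real.pi * (w 0 - w 1 + w 2)))]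

lemma FC_GC (ε : ℝ) (w : Fin 3 → ℝ) : FC ε (GC ε w) = w := by
  funext i
  fin_cases i <;> simp [FC, GC] <;> ring

lemma GC_FC (ε : ℝ) (v : Fin 3 → ℝ) : GC ε (FC ε v) = v := by
  funext i
  fin_cases i <;> simp only [GC, FC, Matrix.cons_val_zero, Matrix.cons_val_one,
    Matrix.head_cons, Matrix.cons_val_two, Matrix.tail_cons] <;> ring_nf <;> simp

lemma FC_bij (ε : ℝ) : Function.Bijective (FC ε) :=
  Function.bijective_iff_has_inverse.2
    ⟨GC ε, fun v => GC_FC ε v, fun w => FC_GC ε w⟩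

/-- Linear part of `FC` as a continuous linear map. -/
noncomputable def Bmap : (Fin 3 → ℝ) →L[ℝ] (Fin 3 → ℝ) :=
  LinearMap.toContinuousLinearMap
    { toFun := fun v => ![2 * v 0 + v 1, v 0 + 2 * v 1 + v 2, v 1 + v 2]
      map_add' := by
        intro a b; funext i; fin_cases i <;> simp <;> ring
      map_smul' := by
        intro c a; funext i; fin_cases i <;> simp <;> ring }

/-- The derivative of `FC ε` at `v`. -/
noncomputable def Dmap (ε : ℝ) (v : Fin 3 → ℝ) : (Fin 3 → ℝ) →L[ℝ] (Fin 3 → ℝ) :=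
  Bmap + ((ε * (Real.cos (2 * Real.pi * v 0) * (2 * Real.pi * 1))) •
    (ContinuousLinearMap.proj (R := ℝ) (φ := fun _ : Fin 3 => ℝ) 0)).smulRight
      (![1, 1, 0] : Fin 3 → ℝ)

lemma FC_eq (ε : ℝ) : FC ε =
    fun v => Bmap v + (ε * Real.sin (2 * Real.pi * v 0)) • (![1, 1, 0] : Fin 3 → ℝ) := by
  funext v i
  fin_cases i <;>
    simp [FC, Bmap, LinearMap.toContinuousLinearMap, Pi.smul_apply] <;> ring

lemma hasFDerivAt_FC (ε : ℝ) (v : Fin 3 → ℝ) : HasFDerivAt (FC ε) (Dmap ε v) v := by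
  rw [FC_eq]
  apply HasFDerivAt.add (Bmap.hasFDerivAt)
  have hl : HasFDerivAt (fun w : Fin 3 → ℝ => w 0)
      (ContinuousLinearMap.proj (R := ℝ) (φ := fun _ : Fin 3 => ℝ) 0) v :=
    hasFDerivAt_apply 0 v
  have hs : HasDerivAt (fun t : ℝ => ε * Real.sin (2 * Real.pi * t))
      (ε * (Real.cos (2 * Real.pi * v 0) * (2 * Real.pi * 1))) (v 0) :=
    (((Real.hasDerivAt_sin (2 * Real.pi * v 0)).comp (v 0)
      ((hasDerivAt_id (v 0)).const_mul (2 * Real.pi)))).const_mul ε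
  exact (hs.comp_hasFDerivAt v hl).smul_const (![1, 1, 0] : Fin 3 → ℝ)

lemma det_Dmap (ε : ℝ) (v : Fin 3 → ℝ) :
    LinearMap.det ((Dmap ε v : (Fin 3 → ℝ) →L[ℝ] (Fin 3 → ℝ)) :
      (Fin 3 → ℝ) →ₗ[ℝ] (Fin 3 → ℝ)) = 1 := by
  rw [← LinearMap.det_toMatrix']
  rw [Matrix.det_fin_three]
  simp [Dmap, Bmap, LinearMap.toMatrix'_apply, LinearMap.toContinuousLinearMap]
  ring

lemma bij_Dmap (ε : ℝ) (v : Fin 3 → ℝ) : Function.Bijective (Dmap ε v) := by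
  have hne : LinearMap.det ((Dmap ε v : (Fin 3 → ℝ) →L[ℝ] (Fin 3 → ℝ)) :
      (Fin 3 → ℝ) →ₗ[ℝ] (Fin 3 → ℝ)) ≠ 0 := by
    rw [det_Dmap]; exact one_ne_zero
  have hb := (LinearMap.equivOfDetNeZero _ hne).bijective
  have he : ⇑(LinearMap.equivOfDetNeZero _ hne) = ⇑(Dmap ε v) := by
    funext x
    simp [LinearMap.equivOfDetNeZero, LinearEquiv.ofIsUnitDet]
  rwa [he] at hb

lemma torusProj_eq_iff (w w' : Fin 3 → ℝ) :
    torusProj w = torusProj w' ↔ ∀ i, ∃ k : ℤ, w i = w' i + k := by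
  rw [funext_iff]
  apply forall_congr'
  intro i
  unfold torusProj
  rw [QuotientAddGroup.eq_iff_sub_mem, AddSubgroup.mem_zmultiples_iff]
  constructor
  · rintro ⟨k, hk⟩; exact ⟨k, by simp [zsmul_eq_mul] at hk; linarith⟩
  · rintro ⟨k, hk⟩; exact ⟨k, by simp [zsmul_eq_mul]; linarith⟩

lemma FC_int_diff (ε : ℝ) (u u' : Fin 3 → ℝ)
    (h : ∀ i, ∃ k : ℤ, FC ε u i = FC ε u' i + k) :
    ∀ i, ∃ k : ℤ, u i = u' i + k := by
  obtain ⟨k0, h0⟩ := h 0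
  obtain ⟨k1, h1⟩ := h 1
  obtain ⟨k2, h2⟩ := h 2
  simp only [FC, Matrix.cons_val_zero, Matrix.cons_val_one, Matrix.head_cons,
    Matrix.cons_val_two, Matrix.tail_cons] at h0 h1 h2
  have hx : u 0 = u' 0 + ((k0 : ℝ) - k1 + k2) := by linarith
  have hsin : Real.sin (2 * Real.pi * u 0) = Real.sin (2 * Real.pi * u' 0) := by
    rw [hx]
    have h' := Real.sin_add_int_mul_two_pi (2 * Real.pi * u' 0) (k0 - k1 + k2)
    rw [← h']
    congr 1
    push_cast
    ring
  rw [hsin] at h0 h1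
  intro i
  fin_cases i
  · exact ⟨k0 - k1 + k2, by push_cast; linarith⟩
  · exact ⟨-k0 + 2 * k1 - 2 * k2, by push_cast; linarith⟩
  · exact ⟨k0 - 2 * k1 + 3 * k2, by push_cast; linarith⟩

/-- For every `ε ≥ 0`, `F_{C,ε} : ℝ³ → ℝ³` is a bijection whose derivative is everywhere
invertible with determinant `1`, and the induced map `f_{C,ε} : 𝕋³ → 𝕋³` is a bijection:
`f_{C,ε}` is a volume-preserving diffeomorphism of `𝕋³`. -/
theorem FC_bijective (ε : ℝ) (hε0 : 0 ≤ ε) :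
    Function.Bijective (FC ε) ∧
    (∀ v : Fin 3 → ℝ,
      LinearMap.det ((fderiv ℝ (FC ε) v : (Fin 3 → ℝ) →L[ℝ] (Fin 3 → ℝ)) :
          (Fin 3 → ℝ) →ₗ[ℝ] (Fin 3 → ℝ)) = 1 ∧
      Function.Bijective (fderiv ℝ (FC ε) v)) ∧
    ∀ g : (Fin 3 → AddCircle (1 : ℝ)) → (Fin 3 → AddCircle (1 : ℝ)),
      (∀ v, g (torusProj v) = torusProj (FC ε v)) → Function.Bijective g := by
  refine ⟨FC_bij ε, fun v => ?_, fun g hg => ?_⟩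
  · rw [(hasFDerivAt_FC ε v).fderiv]
    exact ⟨det_Dmap ε v, bij_Dmap ε v⟩
  · have hsurj : Function.Surjective torusProj := by
      intro a
      choose u hu using fun i => Quotient.exists_rep (a i)
      exact ⟨u, funext fun i => hu i⟩
    constructor
    · intro a b hab
      obtain ⟨u, rfl⟩ := hsurj a
      obtain ⟨u', rfl⟩ := hsurj b
      rw [hg u, hg u'] at hab
      rw [torusProj_eq_iff] at hab ⊢
      exact FC_int_diff ε u u' hab
    · intro b
      obtain ⟨w, rfl⟩ := hsurj b
      refine ⟨torusProj (GC ε w), ?_⟩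
      rw [hg, FC_GC]
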